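/- Let s(n,k,ℓ) be the number of permutations of {1,...,n} with exactly ℓ right-to-left maxima and exactly k pairs (i,j), i < j, such that π_j is a right-to-left maximum, π_i < π_j, and every entry strictly between positions i and j is smaller than π_i. Then s(n,k,ℓ) = s(n-1,k,ℓ-1) + ℓ·s(n-1,k-1,ℓ) + (n-1-ℓ)·s(n-1,k,ℓ) for n ≥ 1, with initial conditions s(0,0,0) = 1, s(n,k,0) = 0 for n ≥ 1, and s(0,k,ℓ) = 0 for (k,ℓ) ≠ (0,0). -/

import Mathlib

/-- The number of pairs `(i,j)`, `i < j`, such that `π j` is a right-to-left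
maximum, `π i < π j`, and every entry strictly between positions `i` and `j`
is smaller than `π i`. -/
def kStat73 {n : ℕ} (π : Equiv.Perm (Fin n)) : ℕ :=
  (Finset.univ.filter fun p : Fin n × Fin n =>
    p.1 < p.2 ∧ (∀ m : Fin n, p.2 < m → π m < π p.2) ∧ π p.1 < π p.2 ∧
      ∀ m : Fin n, p.1 < m → m < p.2 → π m < π p.1).card

/-- The number of right-to-left maxima of `π`. -/
def rlMaxCount {n : ℕ} (π : Equiv.Perm (Fin n)) : ℕ :=
  (Finset.univ.filter fun j : Fin n => ∀ m : Fin n, j < m → π m < π j).card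

/-- `s73 n k ℓ` is the number of permutations of `{1,…,n}` with exactly `ℓ`
right-to-left maxima and exactly `k` counted pairs (indices in `ℤ`, so that the
value is `0` for negative arguments). -/
def s73 (n : ℕ) (k ℓ : ℤ) : ℕ :=
  (Finset.univ.filter fun π : Equiv.Perm (Fin n) =>
    (kStat73 π : ℤ) = k ∧ (rlMaxCount π : ℤ) = ℓ).card

namespace S73Aux

open Equiv Finset Fin

variable {m : ℕ}

/-- Insert the new minimum value `0` at position `p`. -/
def ins (σ : Equiv.Perm (Fin m)) (p : Fin (m + 1)) : Equiv.Perm (Fin (m + 1)) :=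
  (finSuccEquiv' p).trans ((σ.optionCongr).trans (finSuccEquiv' 0).symm)

@[simp] lemma ins_self (σ : Equiv.Perm (Fin m)) (p : Fin (m + 1)) : ins σ p p = 0 := by
  simp [ins, finSuccEquiv'_at, finSuccEquiv'_symm_none]

@[simp] lemma ins_succAbove (σ : Equiv.Perm (Fin m)) (p : Fin (m + 1)) (i : Fin m) :
    ins σ p (p.succAbove i) = (σ i).succ := by
  simp [ins, finSuccEquiv'_succAbove, finSuccEquiv'_symm_some, Fin.zero_succAbove]

lemma ins_eq_zero_iff {σ : Equiv.Perm (Fin m)} {p x : Fin (m + 1)} :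
    ins σ p x = 0 ↔ x = p := by
  constructor
  · intro h
    by_contra hne
    obtain ⟨i, rfl⟩ := exists_succAbove_eq hne
    rw [ins_succAbove] at h
    exact Fin.succ_ne_zero _ h
  · rintro rfl; exact ins_self _ _

lemma ins_injective :
    Function.Injective (fun pσ : Fin (m + 1) × Equiv.Perm (Fin m) => ins pσ.2 pσ.1) := by
  rintro ⟨p, σ⟩ ⟨p', σ'⟩ h
  simp only at h
  have hp : p = p' := by
    have := ins_self σ p
    rw [h] at this
    exact ins_eq_zero_iff.mp this
  subst hp
  have hσ : σ = σ' := by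
    ext i
    have h1 := ins_succAbove σ p i
    have h2 := ins_succAbove σ' p i
    rw [h] at h1
    exact Fin.val_eq_of_eq (Fin.succ_injective _ (h1.symm.trans h2))
  rw [hσ]

lemma ins_surjective (π : Equiv.Perm (Fin (m + 1))) :
    ∃ pσ : Fin (m + 1) × Equiv.Perm (Fin m), ins pσ.2 pσ.1 = π := by
  set p : Fin (m + 1) := π⁻¹ 0 with hp
  have hπp : π p = 0 := Equiv.apply_symm_apply π 0
  set e : Option (Fin m) ≃ Option (Fin m) :=
    (finSuccEquiv' p).symm.trans (π.trans (finSuccEquiv' 0)) with he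
  have hnone : e none = none := by
    simp [he, finSuccEquiv'_symm_none, hπp, finSuccEquiv'_at]
  refine ⟨⟨p, e.removeNone⟩, ?_⟩
  show ins e.removeNone p = π
  apply Equiv.ext
  intro x
  rcases eq_or_ne x p with rfl | hne
  · rw [ins_self, hπp]
  · obtain ⟨i, rfl⟩ := exists_succAbove_eq hne
    rw [ins_succAbove]
    have hsome : ∃ y, e (some i) = some y := by
      rcases h : e (some i) with _ | y
      · exfalso
        have := e.injective (h.trans hnone.symm)
        simp at this
      · exact ⟨y, rfl⟩
    have h1 : some (e.removeNone i) = e (some i) := Equiv.removeNone_some e hsome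
    have h2 : e (some i) = finSuccEquiv' 0 (π (p.succAbove i)) := by
      simp [he, finSuccEquiv'_symm_some]
    rw [h2] at h1
    have := congrArg (finSuccEquiv' 0).symm h1
    rw [Equiv.symm_apply_apply, finSuccEquiv'_symm_some, Fin.zero_succAbove] at this
    exact this

lemma rlmax_succAbove_iff (σ : Equiv.Perm (Fin m)) (p : Fin (m + 1)) (i : Fin m) :
    (∀ c : Fin (m + 1), p.succAbove i < c → ins σ p c < ins σ p (p.succAbove i)) ↔
      (∀ c : Fin m, i < c → σ c < σ i) := by
  constructor
  · intro h c hc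
    have := h (p.succAbove c) (succAbove_lt_succAbove_iff.mpr hc)
    rwa [ins_succAbove, ins_succAbove, Fin.succ_lt_succ_iff] at this
  · intro h c hc
    rcases eq_or_ne c p with rfl | hne
    · rw [ins_self, ins_succAbove]
      exact Fin.succ_pos _
    · obtain ⟨c', rfl⟩ := exists_succAbove_eq hne
      rw [ins_succAbove, ins_succAbove, Fin.succ_lt_succ_iff]
      exact h c' (succAbove_lt_succAbove_iff.mp hc)

lemma rlmax_p_iff (σ : Equiv.Perm (Fin m)) (p : Fin (m + 1)) :
    (∀ c : Fin (m + 1), p < c → ins σ p c < ins σ p p) ↔ p = Fin.last m := by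
  rw [ins_self]
  constructor
  · intro h
    by_contra hne
    exact Fin.not_lt_zero _ (h _ (Fin.lt_last_iff_ne_last.mpr hne))
  · rintro rfl c hc
    exact absurd hc (not_lt.mpr (Fin.le_last c))

lemma rlMaxCount_ins (σ : Equiv.Perm (Fin m)) (p : Fin (m + 1)) :
    rlMaxCount (ins σ p) = rlMaxCount σ + if p = Fin.last m then 1 else 0 := by
  classical
  unfold rlMaxCount
  set π := ins σ p with hπ
  set S := Finset.univ.filter fun j : Fin (m + 1) => ∀ c : Fin (m + 1), j < c → π c < π j with hS
  have hsplit : S.card = (S.filter (fun j => ¬ j = p)).card + (S.filter (fun j => j = p)).card := by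
    have := Finset.card_filter_add_card_filter_not (s := S) (p := fun j => j = p)
    omega
  have h1 : S.filter (fun j => ¬ j = p) =
      (Finset.univ.filter fun j : Fin m => ∀ c : Fin m, j < c → σ c < σ j).image p.succAbove := by
    ext x
    simp only [Finset.mem_image, Finset.mem_filter, Finset.mem_univ, true_and, hS]
    constructor
    · rintro ⟨hP, hne⟩
      obtain ⟨i, rfl⟩ := exists_succAbove_eq hne
      exact ⟨i, (rlmax_succAbove_iff σ p i).mp hP, rfl⟩
    · rintro ⟨i, hi, rfl⟩
      exact ⟨(rlmax_succAbove_iff σ p i).mpr hi, succAbove_ne p i⟩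
  have h2 : (S.filter (fun j => j = p)).card = if p = Fin.last m then 1 else 0 := by
    split_ifs with hl
    · rw [Finset.card_eq_one]
      refine ⟨p, ?_⟩
      ext x
      simp only [Finset.mem_filter, Finset.mem_univ, true_and, Finset.mem_singleton, hS]
      constructor
      · rintro ⟨_, rfl⟩; rfl
      · rintro rfl
        exact ⟨(rlmax_p_iff σ _).mpr hl, rfl⟩
    · rw [Finset.card_eq_zero]
      ext x
      simp only [Finset.mem_filter, Finset.mem_univ, true_and, Finset.notMem_empty,
        iff_false, not_and, hS]
      rintro hP rfl
      exact hl ((rlmax_p_iff σ _).mp hP)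
  rw [hsplit, h1, h2, Finset.card_image_of_injective _ (succAbove_right_injective)]

/-- The condition on `(σ, p)` under which inserting `0` at position `p` creates a new
counted pair: the position following `p` exists and is a right-to-left maximum. -/
def cond (σ : Equiv.Perm (Fin m)) (p : Fin (m + 1)) : Prop :=
  ∃ h : p ≠ Fin.last m, ∀ c : Fin m, p.castPred h < c → σ c < σ (p.castPred h)

lemma pair_from_p_iff (σ : Equiv.Perm (Fin m)) (p b : Fin (m + 1)) :
    (p < b ∧ (∀ c : Fin (m + 1), b < c → ins σ p c < ins σ p b) ∧
        ins σ p p < ins σ p b ∧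
        (∀ c : Fin (m + 1), p < c → c < b → ins σ p c < ins σ p p)) ↔
      ∃ h : p ≠ Fin.last m, b = (p.castPred h).succ ∧
        (∀ c : Fin m, p.castPred h < c → σ c < σ (p.castPred h)) := by
  constructor
  · rintro ⟨hab, hrl, _, hbet⟩
    have h : p ≠ Fin.last m := Fin.ne_last_of_lt hab
    have hbval : (b : ℕ) = (p : ℕ) + 1 := by
      by_contra hne
      have h1 : (p : ℕ) + 1 < (b : ℕ) := by
        have := hab
        rw [Fin.lt_def] at this
        omega
      set c : Fin (m + 1) := ⟨(p : ℕ) + 1, lt_trans h1 b.isLt⟩ with hc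
      have h2 : p < c := by rw [Fin.lt_def]; simp [hc]
      have h3 : c < b := by rw [Fin.lt_def]; simpa [hc] using h1
      have := hbet c h2 h3
      rw [ins_self] at this
      exact Fin.not_lt_zero _ this
    have hb : b = (p.castPred h).succ := by
      apply Fin.ext
      rw [hbval, Fin.val_succ, Fin.coe_castPred]
    refine ⟨h, hb, ?_⟩
    have hb' : b = p.succAbove (p.castPred h) := by
      rw [succAbove_castPred_self]; exact hb
    rw [hb'] at hrl
    exact (rlmax_succAbove_iff σ p _).mp hrl
  · rintro ⟨h, rfl, hcond⟩
    have hb' : (p.castPred h).succ = p.succAbove (p.castPred h) :=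
      (succAbove_castPred_self p h).symm
    have hlt : p < (p.castPred h).succ := by
      rw [Fin.lt_def, Fin.val_succ, Fin.coe_castPred]
      omega
    refine ⟨hlt, ?_, ?_, ?_⟩
    · rw [hb']
      exact (rlmax_succAbove_iff σ p _).mpr hcond
    · rw [hb', ins_self, ins_succAbove]
      exact Fin.succ_pos _
    · intro c hc1 hc2
      exfalso
      rw [Fin.lt_def] at hc1 hc2
      rw [Fin.val_succ, Fin.coe_castPred] at hc2
      omega

open scoped Classical in
lemma kStat73_ins (σ : Equiv.Perm (Fin m)) (p : Fin (m + 1)) :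
    kStat73 (ins σ p) = kStat73 σ + if cond σ p then 1 else 0 := by
  classical
  unfold kStat73
  set π := ins σ p with hπ
  set S := Finset.univ.filter fun q : Fin (m + 1) × Fin (m + 1) =>
    q.1 < q.2 ∧ (∀ c : Fin (m + 1), q.2 < c → π c < π q.2) ∧ π q.1 < π q.2 ∧
      ∀ c : Fin (m + 1), q.1 < c → c < q.2 → π c < π q.1 with hS
  have hsplit : S.card = (S.filter (fun q => ¬ q.1 = p)).card
      + (S.filter (fun q => q.1 = p)).card := by
    have := Finset.card_filter_add_card_filter_not (s := S) (p := fun q => q.1 = p)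
    omega
  have h1 : S.filter (fun q => ¬ q.1 = p) =
      (Finset.univ.filter fun q : Fin m × Fin m =>
        q.1 < q.2 ∧ (∀ c : Fin m, q.2 < c → σ c < σ q.2) ∧ σ q.1 < σ q.2 ∧
          ∀ c : Fin m, q.1 < c → c < q.2 → σ c < σ q.1).image
        (Prod.map p.succAbove p.succAbove) := by
    ext ⟨a, b⟩
    simp only [Finset.mem_image, Finset.mem_filter, Finset.mem_univ, true_and, hS,
      Prod.exists, Prod.map_apply, Prod.mk.injEq]
    constructor
    · rintro ⟨⟨hab, hrl, hval, hbet⟩, hne⟩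
      have hbp : b ≠ p := by
        intro hbp
        rw [hbp, ins_self] at hval
        exact Fin.not_lt_zero _ hval
      obtain ⟨i, rfl⟩ := exists_succAbove_eq hne
      obtain ⟨j, rfl⟩ := exists_succAbove_eq hbp
      refine ⟨i, j, ⟨succAbove_lt_succAbove_iff.mp hab,
        (rlmax_succAbove_iff σ p j).mp hrl, ?_, ?_⟩, rfl, rfl⟩
      · rw [ins_succAbove, ins_succAbove, Fin.succ_lt_succ_iff] at hval
        exact hval
      · intro c hc1 hc2
        have := hbet (p.succAbove c) (succAbove_lt_succAbove_iff.mpr hc1)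
          (succAbove_lt_succAbove_iff.mpr hc2)
        rwa [ins_succAbove, ins_succAbove, Fin.succ_lt_succ_iff] at this
    · rintro ⟨i, j, ⟨hab, hrl, hval, hbet⟩, rfl, rfl⟩
      refine ⟨⟨succAbove_lt_succAbove_iff.mpr hab,
        (rlmax_succAbove_iff σ p j).mpr hrl, ?_, ?_⟩, succAbove_ne p i⟩
      · rw [ins_succAbove, ins_succAbove, Fin.succ_lt_succ_iff]
        exact hval
      · intro c hc1 hc2
        rcases eq_or_ne c p with rfl | hcp
        · rw [ins_self, ins_succAbove]
          exact Fin.succ_pos _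
        · obtain ⟨c', rfl⟩ := exists_succAbove_eq hcp
          rw [ins_succAbove, ins_succAbove, Fin.succ_lt_succ_iff]
          exact hbet c' (succAbove_lt_succAbove_iff.mp hc1) (succAbove_lt_succAbove_iff.mp hc2)
  have h2 : (S.filter (fun q => q.1 = p)).card = if cond σ p then 1 else 0 := by
    split_ifs with hc
    · obtain ⟨h, hcond⟩ := hc
      rw [Finset.card_eq_one]
      refine ⟨(p, (p.castPred h).succ), ?_⟩
      ext ⟨a, b⟩
      simp only [Finset.mem_filter, Finset.mem_univ, true_and, Finset.mem_singleton, hS,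
        Prod.mk.injEq]
      constructor
      · rintro ⟨hQ, rfl⟩
        obtain ⟨h', hb, _⟩ := (pair_from_p_iff σ a b).mp hQ
        exact ⟨rfl, hb⟩
      · rintro ⟨rfl, rfl⟩
        exact ⟨(pair_from_p_iff σ a _).mpr ⟨h, rfl, hcond⟩, rfl⟩
    · rw [Finset.card_eq_zero]
      ext ⟨a, b⟩
      simp only [Finset.mem_filter, Finset.mem_univ, true_and, Finset.notMem_empty,
        iff_false, not_and, hS]
      rintro hQ rfl
      obtain ⟨h', _, hcond⟩ := (pair_from_p_iff σ a b).mp hQ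
      exact hc ⟨h', hcond⟩
  rw [hsplit, h1, h2,
    Finset.card_image_of_injective _ (succAbove_right_injective.prodMap succAbove_right_injective)]

open scoped Classical in
lemma card_cond (σ : Equiv.Perm (Fin m)) :
    (Finset.univ.filter fun p : Fin (m + 1) => cond σ p).card = rlMaxCount σ := by
  unfold rlMaxCount
  have himg : (Finset.univ.filter fun p : Fin (m + 1) => cond σ p) =
      (Finset.univ.filter fun j : Fin m => ∀ c : Fin m, j < c → σ c < σ j).image Fin.castSucc := by
    ext p
    simp only [Finset.mem_image, Finset.mem_filter, Finset.mem_univ, true_and]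
    constructor
    · rintro ⟨h, hc⟩
      exact ⟨p.castPred h, hc, Fin.castSucc_castPred p h⟩
    · rintro ⟨j, hj, rfl⟩
      refine ⟨(Fin.castSucc_lt_last j).ne, ?_⟩
      simpa [Fin.castPred_castSucc] using hj
  rw [himg, Finset.card_image_of_injective _ (Fin.castSucc_injective m)]

lemma rlMaxCount_le (σ : Equiv.Perm (Fin m)) : rlMaxCount σ ≤ m := by
  unfold rlMaxCount
  have := Finset.card_filter_le (Finset.univ : Finset (Fin m))
    (fun j => ∀ c : Fin m, j < c → σ c < σ j)
  simpa using this

open scoped Classical in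
lemma sum_over_p (σ : Equiv.Perm (Fin m)) (k ℓ : ℤ) :
    (∑ p : Fin (m + 1), if (kStat73 (ins σ p) : ℤ) = k ∧ (rlMaxCount (ins σ p) : ℤ) = ℓ
      then (1 : ℤ) else 0) =
    (if (kStat73 σ : ℤ) = k ∧ (rlMaxCount σ : ℤ) = ℓ - 1 then (1 : ℤ) else 0)
      + ℓ * (if (kStat73 σ : ℤ) = k - 1 ∧ (rlMaxCount σ : ℤ) = ℓ then (1 : ℤ) else 0)
      + ((m : ℤ) - ℓ) * (if (kStat73 σ : ℤ) = k ∧ (rlMaxCount σ : ℤ) = ℓ then (1 : ℤ) else 0) := by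
  set A : ℤ := if (kStat73 σ : ℤ) = k ∧ (rlMaxCount σ : ℤ) = ℓ - 1 then (1 : ℤ) else 0 with hA
  set B : ℤ := if (kStat73 σ : ℤ) = k - 1 ∧ (rlMaxCount σ : ℤ) = ℓ then (1 : ℤ) else 0 with hB
  set C : ℤ := if (kStat73 σ : ℤ) = k ∧ (rlMaxCount σ : ℤ) = ℓ then (1 : ℤ) else 0 with hC
  have hrec : ∀ p : Fin (m + 1),
      (if (kStat73 (ins σ p) : ℤ) = k ∧ (rlMaxCount (ins σ p) : ℤ) = ℓ then (1 : ℤ) else 0)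
        = if p = Fin.last m then A else if cond σ p then B else C := by
    intro p
    rw [kStat73_ins, rlMaxCount_ins]
    by_cases hl : p = Fin.last m
    · have hcond : ¬ cond σ p := by rintro ⟨h, -⟩; exact h hl
      rw [if_pos hl, if_pos hl, if_neg hcond, hA]
      apply if_congr _ rfl rfl
      push_cast
      omega
    · rw [if_neg hl, if_neg hl]
      by_cases hcond : cond σ p
      · rw [if_pos hcond, if_pos hcond, hB]
        apply if_congr _ rfl rfl
        push_cast
        omega
      · rw [if_neg hcond, if_neg hcond, hC]
        apply if_congr _ rfl rfl
        push_cast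
        omega
  rw [Finset.sum_congr rfl fun p _ => hrec p]
  rw [← Finset.sum_filter_add_sum_filter_not Finset.univ (fun p => p = Fin.last m)]
  have hfl : Finset.univ.filter (fun p : Fin (m + 1) => p = Fin.last m) = {Fin.last m} := by
    ext x; simp
  have hD : ∀ p ∈ Finset.univ.filter (fun p : Fin (m + 1) => ¬ p = Fin.last m),
      (if p = Fin.last m then A else if cond σ p then B else C) = if cond σ p then B else C := by
    intro p hp
    rw [Finset.mem_filter] at hp
    rw [if_neg hp.2]
  rw [Finset.sum_congr rfl hD, hfl, Finset.sum_singleton, if_pos rfl, Finset.sum_ite,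
    Finset.sum_const, Finset.sum_const]
  have hr := rlMaxCount_le σ
  have hfc : (Finset.univ.filter (fun p : Fin (m + 1) => ¬ p = Fin.last m)).filter
      (fun p => cond σ p) = Finset.univ.filter (fun p : Fin (m + 1) => cond σ p) := by
    rw [Finset.filter_filter]
    apply Finset.filter_congr
    intro p _
    constructor
    · rintro ⟨-, h⟩; exact h
    · rintro ⟨hne, hc⟩
      exact ⟨hne, hne, hc⟩
  have hcardD : (Finset.univ.filter (fun p : Fin (m + 1) => ¬ p = Fin.last m)).card = m := by
    have := Finset.card_filter_add_card_filter_not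
      (s := (Finset.univ : Finset (Fin (m + 1)))) (p := fun p => p = Fin.last m)
    rw [hfl] at this
    simp only [Finset.card_singleton, Finset.card_univ, Fintype.card_fin] at this
    omega
  have hcard1 : ((Finset.univ.filter (fun p : Fin (m + 1) => ¬ p = Fin.last m)).filter
      (fun p => cond σ p)).card = rlMaxCount σ := by
    rw [hfc, card_cond]
  have hcard2 : ((Finset.univ.filter (fun p : Fin (m + 1) => ¬ p = Fin.last m)).filter
      (fun p => ¬ cond σ p)).card = m - rlMaxCount σ := by
    have := Finset.card_filter_add_card_filter_not
      (s := Finset.univ.filter (fun p : Fin (m + 1) => ¬ p = Fin.last m))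
      (p := fun p => cond σ p)
    rw [hcard1, hcardD] at this
    omega
  rw [hcard1, hcard2, nsmul_eq_mul, nsmul_eq_mul]
  simp only [hA, hB, hC]
  split_ifs <;> push_cast <;> omega

open scoped Classical in
lemma s73_cast_sum (m : ℕ) (k' ℓ' : ℤ) :
    (s73 m k' ℓ' : ℤ) = ∑ σ : Equiv.Perm (Fin m),
      if (kStat73 σ : ℤ) = k' ∧ (rlMaxCount σ : ℤ) = ℓ' then (1 : ℤ) else 0 := by
  rw [s73, Finset.card_filter]
  simp only [Nat.cast_sum]
  apply Finset.sum_congr rfl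
  intro σ _
  split_ifs <;> simp

open scoped Classical in
lemma step (m : ℕ) (k ℓ : ℤ) :
    (s73 (m + 1) k ℓ : ℤ) = (s73 m k (ℓ - 1) : ℤ) + ℓ * (s73 m (k - 1) ℓ : ℤ)
      + ((m : ℤ) - ℓ) * (s73 m k ℓ : ℤ) := by
  have hbij : Function.Bijective
      (fun pσ : Fin (m + 1) × Equiv.Perm (Fin m) => ins pσ.2 pσ.1) :=
    ⟨ins_injective, ins_surjective⟩
  have hcard : s73 (m + 1) k ℓ =
      (Finset.univ.filter (fun pσ : Fin (m + 1) × Equiv.Perm (Fin m) =>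
        (kStat73 (ins pσ.2 pσ.1) : ℤ) = k ∧ (rlMaxCount (ins pσ.2 pσ.1) : ℤ) = ℓ)).card := by
    rw [s73]
    refine Finset.card_equiv (Equiv.ofBijective _ hbij).symm ?_
    intro π
    simp only [Finset.mem_filter, Finset.mem_univ, true_and]
    have hπ : ins ((Equiv.ofBijective _ hbij).symm π).2 ((Equiv.ofBijective _ hbij).symm π).1
        = π := by
      have := (Equiv.ofBijective _ hbij).apply_symm_apply π
      exact this
    rw [hπ]
  have h1 : (s73 (m + 1) k ℓ : ℤ) = ∑ σ : Equiv.Perm (Fin m), ∑ p : Fin (m + 1),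
      if (kStat73 (ins σ p) : ℤ) = k ∧ (rlMaxCount (ins σ p) : ℤ) = ℓ then (1 : ℤ) else 0 := by
    rw [hcard, Finset.card_filter]
    simp only [Nat.cast_sum]
    rw [Fintype.sum_prod_type]
    rw [Finset.sum_comm]
    apply Finset.sum_congr rfl
    intro σ _
    apply Finset.sum_congr rfl
    intro p _
    split_ifs <;> simp
  rw [h1, Finset.sum_congr rfl fun σ _ => sum_over_p σ k ℓ,
    Finset.sum_add_distrib, Finset.sum_add_distrib, ← Finset.mul_sum, ← Finset.mul_sum,
    ← s73_cast_sum, ← s73_cast_sum, ← s73_cast_sum]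

lemma init0 : s73 0 0 0 = 1 := by
  have hk : ∀ π : Equiv.Perm (Fin 0), kStat73 π = 0 := by
    intro π
    rw [kStat73]
    simp
  have hr : ∀ π : Equiv.Perm (Fin 0), rlMaxCount π = 0 := by
    intro π
    rw [rlMaxCount]
    simp
  rw [s73]
  have : (Finset.univ.filter fun π : Equiv.Perm (Fin 0) =>
      (kStat73 π : ℤ) = 0 ∧ (rlMaxCount π : ℤ) = 0) = Finset.univ := by
    apply Finset.filter_true_of_mem
    intro π _
    rw [hk, hr]
    simp
  rw [this, Finset.card_univ]
  simp

lemma init_pos (m : ℕ) (k : ℤ) : s73 (m + 1) k 0 = 0 := by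
  rw [s73, Finset.card_eq_zero]
  ext π
  simp only [Finset.mem_filter, Finset.mem_univ, true_and, Finset.notMem_empty, iff_false,
    not_and]
  intro _ hr
  have hmem : Fin.last m ∈ Finset.univ.filter
      (fun j : Fin (m + 1) => ∀ c : Fin (m + 1), j < c → π c < π j) := by
    simp only [Finset.mem_filter, Finset.mem_univ, true_and]
    intro c hc
    exact absurd hc (not_lt.mpr (Fin.le_last c))
  have : 0 < rlMaxCount π := Finset.card_pos.mpr ⟨Fin.last m, hmem⟩
  rw [rlMaxCount] at this
  rw [rlMaxCount] at hr
  omega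

lemma init_zero (k ℓ : ℤ) (h : (k, ℓ) ≠ (0, 0)) : s73 0 k ℓ = 0 := by
  rw [s73, Finset.card_eq_zero]
  ext π
  simp only [Finset.mem_filter, Finset.mem_univ, true_and, Finset.notMem_empty, iff_false,
    not_and]
  intro hk hr
  have h1 : kStat73 π = 0 := by rw [kStat73]; simp
  have h2 : rlMaxCount π = 0 := by rw [rlMaxCount]; simp
  rw [h1] at hk
  rw [h2] at hr
  apply h
  push_cast at hk hr
  rw [Prod.mk.injEq]
  exact ⟨hk.symm, hr.symm⟩

end S73Aux

/-- The recurrence `s(n,k,ℓ) = s(n-1,k,ℓ-1) + ℓ·s(n-1,k-1,ℓ) + (n-1-ℓ)·s(n-1,k,ℓ)`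
for `n ≥ 1`, together with the initial conditions `s(0,0,0) = 1`,
`s(n,k,0) = 0` for `n ≥ 1`, and `s(0,k,ℓ) = 0` for `(k,ℓ) ≠ (0,0)`. -/
theorem s73_recurrence :
    (∀ n : ℕ, 1 ≤ n → ∀ k ℓ : ℤ,
      (s73 n k ℓ : ℤ) =
        (s73 (n - 1) k (ℓ - 1) : ℤ) + ℓ * (s73 (n - 1) (k - 1) ℓ : ℤ) +
          ((n : ℤ) - 1 - ℓ) * (s73 (n - 1) k ℓ : ℤ)) ∧
    s73 0 0 0 = 1 ∧
    (∀ n : ℕ, 1 ≤ n → ∀ k : ℤ, s73 n k 0 = 0) ∧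
    (∀ k ℓ : ℤ, (k, ℓ) ≠ (0, 0) → s73 0 k ℓ = 0) := by
  refine ⟨?_, S73Aux.init0, ?_, S73Aux.init_zero⟩
  · intro n hn k ℓ
    obtain ⟨m, rfl⟩ : ∃ m, n = m + 1 := ⟨n - 1, by omega⟩
    have := S73Aux.step m k ℓ
    simp only [Nat.add_sub_cancel]
    rw [this]
    push_cast
    ring
  · intro n hn k
    obtain ⟨m, rfl⟩ : ∃ m, n = m + 1 := ⟨n - 1, by omega⟩
    exact S73Aux.init_pos m k
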